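/- arXiv:2002.01516 — 6 statements merged into one kernel-verified Lean document; each statement's English description precedes it below -/
import Mathlib

section
/- Let F : ℝ^s → ℝ^s be continuous and let I_k, I_{k+1}, I_{k+2} be closed boxes (products of closed intervals [a_{ik}, b_{ik}]) such that F(I_k) ⊆ I_{k+1} ⊆ int(I_k) and F(I_{k+1}) ⊆ I_{k+2} ⊆ int(I_{k+1}). Then there exist closed boxes J̄ and J such that J̄ ⊆ int(I_k), I_{k+1} ⊆ int(J̄), I_{k+2} ⊆ int(J), J ⊆ int(I_{k+1}), and F(J̄) ⊆ J. -/
open Set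

lemma box_subset_thickening {s : ℕ} (a b : Fin s → ℝ) (hab : ∀ i, a i ≤ b i)
    {δ ε : ℝ} (hδ : 0 < δ) (hδε : δ < ε) :
    (univ.pi fun i => Icc (a i - δ) (b i + δ)) ⊆
      Metric.thickening ε (univ.pi fun i => Icc (a i) (b i)) := by
  intro x hx
  rw [Metric.mem_thickening_iff]
  refine ⟨fun i => max (a i) (min (x i) (b i)), ?_, ?_⟩
  · intro i _
    exact ⟨le_max_left _ _, max_le (hab i) (min_le_right _ _)⟩
  · rw [dist_pi_lt_iff (lt_trans hδ hδε)]
    intro i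
    have h1 := (hx i (mem_univ i)).1
    have h2 := (hx i (mem_univ i)).2
    have : |x i - max (a i) (min (x i) (b i))| ≤ δ := by
      rw [abs_le]
      constructor <;>
      · rcases le_total (x i) (a i) with h | h <;> rcases le_total (x i) (b i) with h' | h' <;>
          simp [max_eq_left, max_eq_right, min_eq_left, min_eq_right, *] <;> linarith [hab i]
    calc dist (x i) _ = |x i - max (a i) (min (x i) (b i))| := Real.dist_eq _ _
      _ ≤ δ := this
      _ < ε := hδε

/-- Given a continuous `F : ℝ^s → ℝ^s` and closed boxes
`I_k, I_{k+1}, I_{k+2}` with `F(I_k) ⊆ I_{k+1} ⊆ int I_k` and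
`F(I_{k+1}) ⊆ I_{k+2} ⊆ int I_{k+1}`, there exist closed boxes `J̄`, `J` with
`J̄ ⊆ int I_k`, `I_{k+1} ⊆ int J̄`, `I_{k+2} ⊆ int J`, `J ⊆ int I_{k+1}` and
`F(J̄) ⊆ J`. -/
theorem stmt0 {s : ℕ} (F : (Fin s → ℝ) → (Fin s → ℝ)) (hF : Continuous F)
    (a b : ℕ → Fin s → ℝ) (k : ℕ)
    (hab : ∀ n ∈ ({k, k+1, k+2} : Set ℕ), ∀ i, a n i < b n i)
    (I : ℕ → Set (Fin s → ℝ))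
    (hI : ∀ n ∈ ({k, k+1, k+2} : Set ℕ), I n = univ.pi fun i => Icc (a n i) (b n i))
    (h1 : F '' I k ⊆ I (k+1)) (h2 : I (k+1) ⊆ interior (I k))
    (h3 : F '' I (k+1) ⊆ I (k+2)) (h4 : I (k+2) ⊆ interior (I (k+1))) :
    ∃ (cbar dbar c d : Fin s → ℝ),
      (∀ i, cbar i < dbar i) ∧ (∀ i, c i < d i) ∧
      (univ.pi fun i => Icc (cbar i) (dbar i)) ⊆ interior (I k) ∧
      I (k+1) ⊆ interior (univ.pi fun i => Icc (cbar i) (dbar i)) ∧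
      I (k+2) ⊆ interior (univ.pi fun i => Icc (c i) (d i)) ∧
      (univ.pi fun i => Icc (c i) (d i)) ⊆ interior (I (k+1)) ∧
      F '' (univ.pi fun i => Icc (cbar i) (dbar i)) ⊆
        (univ.pi fun i => Icc (c i) (d i)) := by
  have hk : k ∈ ({k, k+1, k+2} : Set ℕ) := by simp
  have hk1 : k+1 ∈ ({k, k+1, k+2} : Set ℕ) := by simp
  have hk2 : k+2 ∈ ({k, k+1, k+2} : Set ℕ) := by simp
  have hab1 := hab _ hk1
  have hab2 := hab _ hk2
  have hIk1 := hI _ hk1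
  have hIk2 := hI _ hk2
  -- compactness of the boxes
  have hcomp1 : IsCompact (I (k+1)) := by
    rw [hIk1]; exact isCompact_univ_pi fun i => isCompact_Icc
  have hcomp2 : IsCompact (I (k+2)) := by
    rw [hIk2]; exact isCompact_univ_pi fun i => isCompact_Icc
  -- Step 1: build J around I (k+2)
  obtain ⟨ε2, hε2, hthick2⟩ :=
    hcomp2.exists_thickening_subset_open isOpen_interior h4
  set δ2 := ε2 / 2 with hδ2def
  have hδ2 : 0 < δ2 := by positivity
  set c : Fin s → ℝ := fun i => a (k+2) i - δ2 with hc
  set d : Fin s → ℝ := fun i => b (k+2) i + δ2 with hd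
  have hcd : ∀ i, c i < d i := fun i => by
    have := hab2 i; simp only [hc, hd]; linarith
  have hJthick : (univ.pi fun i => Icc (c i) (d i)) ⊆
      Metric.thickening ε2 (I (k+2)) := by
    rw [hIk2]
    exact box_subset_thickening _ _ (fun i => (hab2 i).le) hδ2 (by linarith)
  have hJsub : (univ.pi fun i => Icc (c i) (d i)) ⊆ interior (I (k+1)) :=
    hJthick.trans hthick2
  have hIk2intJ : I (k+2) ⊆ interior (univ.pi fun i => Icc (c i) (d i)) := by
    rw [hIk2, interior_pi_set finite_univ]
    intro x hx i _
    have := hx i (mem_univ i)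
    simp only [Function.comp, interior_Icc, mem_Ioo, hc, hd]
    constructor <;> [linarith [this.1]; linarith [this.2]]
  -- Step 2: build J̄ around I (k+1)
  set U := interior (I k) ∩ F ⁻¹' (interior (univ.pi fun i => Icc (c i) (d i))) with hU
  have hUopen : IsOpen U := isOpen_interior.inter (isOpen_interior.preimage hF)
  have hIk1U : I (k+1) ⊆ U := by
    intro x hx
    exact ⟨h2 hx, hIk2intJ (h3 (mem_image_of_mem F hx))⟩
  obtain ⟨ε1, hε1, hthick1⟩ := hcomp1.exists_thickening_subset_open hUopen hIk1U
  set δ1 := ε1 / 2 with hδ1def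
  have hδ1 : 0 < δ1 := by positivity
  set cbar : Fin s → ℝ := fun i => a (k+1) i - δ1 with hcbar
  set dbar : Fin s → ℝ := fun i => b (k+1) i + δ1 with hdbar
  have hcdbar : ∀ i, cbar i < dbar i := fun i => by
    have := hab1 i; simp only [hcbar, hdbar]; linarith
  have hJbarU : (univ.pi fun i => Icc (cbar i) (dbar i)) ⊆ U := by
    refine Subset.trans ?_ hthick1
    rw [hIk1]
    exact box_subset_thickening _ _ (fun i => (hab1 i).le) hδ1 (by linarith)
  refine ⟨cbar, dbar, c, d, hcdbar, hcd, ?_, ?_, hIk2intJ, hJsub, ?_⟩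
  · exact hJbarU.trans (inter_subset_left)
  · rw [hIk1, interior_pi_set finite_univ]
    intro x hx i _
    have := hx i (mem_univ i)
    simp only [Function.comp, interior_Icc, mem_Ioo, hcbar, hdbar]
    constructor <;> [linarith [this.1]; linarith [this.2]]
  · rintro y ⟨x, hx, rfl⟩
    exact interior_subset (hJbarU hx).2
end

section
/- Let L = (L_{ij}) be an s × s matrix with nonnegative entries and suppose there exist positive numbers ξ_1, …, ξ_s with ξ_i(1 − L_{ii}) > ∑_{j ≠ i} ξ_j L_{ij} for all i. Define α_i = L_{ii} + ∑_{j ≠ i} (ξ_j/ξ_i) L_{ij} and α = max_i α_i. Then 0 ≤ α < 1, and for any point x* ∈ ℝ^s and any map F : ℝ^s → ℝ^s fixing x* and satisfying |f_i(x) − f_i(x with j-th coordinate replaced by x*_j)| ≤ L_{ij}|x_j − x*_j| componentwise, one has: for every c > 0, if |x_j − x*_j| ≤ c ξ_j for all j, then |f_i(x) − x*_i| ≤ α c ξ_i for all i. -/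
open Finset

/-- Telescoping lemma: updating a finite set of coordinates to `xstar`. -/
lemma update_finset_bound {s : ℕ} (L : Matrix (Fin s) (Fin s) ℝ)
    (xstar : Fin s → ℝ) (F : (Fin s → ℝ) → (Fin s → ℝ))
    (hLip : ∀ (x : Fin s → ℝ) (i j : Fin s),
      |F x i - F (Function.update x j (xstar j)) i| ≤ L i j * |x j - xstar j|)
    (x : Fin s → ℝ) (i : Fin s) (T : Finset (Fin s)) :
    |F x i - F (fun j => if j ∈ T then xstar j else x j) i| ≤
      ∑ j ∈ T, L i j * |x j - xstar j| := by
  induction T using Finset.induction_on with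
  | empty => simp
  | @insert a T ha ih =>
    have hupd : (fun j => if j ∈ insert a T then xstar j else x j)
        = Function.update (fun j => if j ∈ T then xstar j else x j) a (xstar a) := by
      funext j
      by_cases hj : j = a
      · subst hj; simp [Function.update]
      · simp [Function.update, hj, Finset.mem_insert]
    rw [hupd, Finset.sum_insert ha]
    have h1 := hLip (fun j => if j ∈ T then xstar j else x j) i a
    have h2 : |F x i - F (Function.update (fun j => if j ∈ T then xstar j else x j) a (xstar a)) i|
        ≤ |F x i - F (fun j => if j ∈ T then xstar j else x j) i|
          + |F (fun j => if j ∈ T then xstar j else x j) i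
              - F (Function.update (fun j => if j ∈ T then xstar j else x j) a (xstar a)) i| := by
      exact abs_sub_le _ _ _
    simp only [ha, if_false] at h1
    linarith

/-- under weighted strict diagonal dominance of `I - L`, the
quantity `α = max_i (L_{ii} + ∑_{j≠i} (ξ_j/ξ_i) L_{ij})` satisfies `0 ≤ α < 1`,
and the componentwise Lipschitz condition yields the contraction estimate
`|f_i(x) − x*_i| ≤ α c ξ_i` on the box `|x_j − x*_j| ≤ c ξ_j`. -/
theorem stmt3 {s : ℕ} (hs : 0 < s) (L : Matrix (Fin s) (Fin s) ℝ)
    (hL : ∀ i j, 0 ≤ L i j)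
    (ξ : Fin s → ℝ) (hξ : ∀ i, 0 < ξ i)
    (hdom : ∀ i, ∑ j ∈ univ.erase i, ξ j * L i j < ξ i * (1 - L i i))
    (α : ℝ)
    (hα : α = univ.sup' (univ_nonempty_iff.mpr (Fin.pos_iff_nonempty.mp hs))
      (fun i => L i i + ∑ j ∈ univ.erase i, (ξ j / ξ i) * L i j)) :
    0 ≤ α ∧ α < 1 ∧
    ∀ (xstar : Fin s → ℝ) (F : (Fin s → ℝ) → (Fin s → ℝ)),
      F xstar = xstar →
      (∀ (x : Fin s → ℝ) (i j : Fin s),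
        |F x i - F (Function.update x j (xstar j)) i| ≤ L i j * |x j - xstar j|) →
      ∀ c : ℝ, 0 < c → ∀ x : Fin s → ℝ,
        (∀ j, |x j - xstar j| ≤ c * ξ j) →
        ∀ i, |F x i - xstar i| ≤ α * c * ξ i := by
  have hne : (univ : Finset (Fin s)).Nonempty := univ_nonempty_iff.mpr (Fin.pos_iff_nonempty.mp hs)
  have hαi : ∀ i : Fin s, L i i + ∑ j ∈ univ.erase i, (ξ j / ξ i) * L i j ≤ α := by
    intro i; rw [hα]; exact Finset.le_sup' (fun i => L i i + ∑ j ∈ univ.erase i, (ξ j / ξ i) * L i j) (mem_univ i)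
  have hαnn : 0 ≤ α := by
    obtain ⟨i⟩ := Fin.pos_iff_nonempty.mp hs
    refine le_trans ?_ (hαi i)
    have : 0 ≤ ∑ j ∈ univ.erase i, (ξ j / ξ i) * L i j :=
      Finset.sum_nonneg fun j _ => mul_nonneg (div_nonneg (hξ j).le (hξ i).le) (hL i j)
    linarith [hL i i]
  have hαlt : α < 1 := by
    rw [hα]
    rw [Finset.sup'_lt_iff hne]
    intro i _
    have h := hdom i
    have hxi := hξ i
    have hsum : ∑ j ∈ univ.erase i, (ξ j / ξ i) * L i j
        = (∑ j ∈ univ.erase i, ξ j * L i j) / ξ i := by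
      rw [Finset.sum_div]; congr 1; funext j; ring
    rw [hsum]
    have h2 : (∑ j ∈ univ.erase i, ξ j * L i j) / ξ i < 1 - L i i := by
      rw [div_lt_iff₀ hxi]; nlinarith
    linarith
  refine ⟨hαnn, hαlt, ?_⟩
  intro xstar F hfix hLip c hc x hbox i
  have hall : (fun j => if j ∈ (univ : Finset (Fin s)) then xstar j else x j) = xstar := by
    funext j; simp
  have key := update_finset_bound L xstar F hLip x i univ
  rw [hall, hfix] at key
  have hb : ∑ j ∈ univ, L i j * |x j - xstar j| ≤ ∑ j ∈ univ, L i j * (c * ξ j) := by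
    apply Finset.sum_le_sum
    intro j _
    exact mul_le_mul_of_nonneg_left (hbox j) (hL i j)
  have hsplit : ∑ j ∈ univ, L i j * (c * ξ j)
      = c * (ξ i * L i i + ∑ j ∈ univ.erase i, ξ j * L i j) := by
    rw [← Finset.add_sum_erase _ _ (mem_univ i), mul_add, Finset.mul_sum]
    congr 1
    · ring
    · apply Finset.sum_congr rfl; intro j _; ring
  have hub : ξ i * L i i + ∑ j ∈ univ.erase i, ξ j * L i j ≤ α * ξ i := by
    have := hαi i
    have hxi := hξ i
    have hsum : ∑ j ∈ univ.erase i, (ξ j / ξ i) * L i j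
        = (∑ j ∈ univ.erase i, ξ j * L i j) / ξ i := by
      rw [Finset.sum_div]; congr 1; funext j; ring
    rw [hsum] at this
    have h2 := mul_le_mul_of_nonneg_right this hxi.le
    have h3 : (L i i + (∑ j ∈ univ.erase i, ξ j * L i j) / ξ i) * ξ i
        = ξ i * L i i + ∑ j ∈ univ.erase i, ξ j * L i j := by
      field_simp
    linarith
  calc |F x i - xstar i| ≤ ∑ j ∈ univ, L i j * |x j - xstar j| := key
    _ ≤ c * (ξ i * L i i + ∑ j ∈ univ.erase i, ξ j * L i j) := by rw [← hsplit]; exact hb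
    _ ≤ c * (α * ξ i) := by apply mul_le_mul_of_nonneg_left hub hc.le
    _ = α * c * ξ i := by ring
end

section
/- Let L be an s × s nonnegative matrix such that I − L is an M-matrix (there exist ξ_i > 0 with ξ_i(1 − L_{ii}) > ∑_{j≠i} ξ_j L_{ij}). Let F : ℝ^s → ℝ^s be continuous with fixed point z_* = (x*_1, …, x*_s), satisfying the componentwise Lipschitz condition |f_i(x) − f_i(x with x_j replaced by x*_j)| ≤ L_{ij}|x_j − x*_j| on an open box D containing z_*. Then z_* is a strong attractor of F in some open box: there exist closed boxes I_n = ∏_i [x*_i − α^{n−1} c ξ_i, x*_i + α^{n−1} c ξ_i] (for suitable c > 0 and α ∈ (0,1)) with I_1 ⊆ D, F(I_n) ⊆ I_{n+1} for all n ≥ 1, and ⋂_n I_n = {z_*}. -/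
open Set

lemma tele_aux {s : ℕ} (L : Matrix (Fin s) (Fin s) ℝ)
    (F : (Fin s → ℝ) → (Fin s → ℝ)) (zstar aD bD : Fin s → ℝ)
    (D : Set (Fin s → ℝ)) (hD : D = univ.pi fun i => Ioo (aD i) (bD i))
    (hzD : zstar ∈ D) (hfix : F zstar = zstar)
    (hlip : ∀ x ∈ D, ∀ i j,
      |F x i - F (Function.update x j (zstar j)) i| ≤ L i j * |x j - zstar j|)
    (x : Fin s → ℝ) (hx : x ∈ D) (i : Fin s) :
    |F x i - zstar i| ≤ ∑ j, L i j * |x j - zstar j| := by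
  set y : ℕ → Fin s → ℝ := fun k j => if (j : ℕ) < k then zstar j else x j with hy
  have hxD : ∀ j, x j ∈ Ioo (aD j) (bD j) := by
    intro j; rw [hD] at hx; exact hx j (mem_univ j)
  have hzDj : ∀ j, zstar j ∈ Ioo (aD j) (bD j) := by
    intro j; rw [hD] at hzD; exact hzD j (mem_univ j)
  have ymem : ∀ k, y k ∈ D := by
    intro k; rw [hD]; intro j _
    simp only [hy]
    split <;> [exact hzDj j; exact hxD j]
  have key : ∀ k, |F x i - F (y k) i| ≤
      ∑ j ∈ Finset.univ.filter (fun j : Fin s => (j : ℕ) < k),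
        L i j * |x j - zstar j| := by
    intro k
    induction k with
    | zero =>
      have : y 0 = x := by funext j; simp [hy]
      simp [this]
    | succ k ih =>
      by_cases hk : k < s
      · set jk : Fin s := ⟨k, hk⟩ with hjk
        have hupd : y (k + 1) = Function.update (y k) jk (zstar jk) := by
          funext j
          rcases eq_or_ne j jk with h | h
          · subst h; simp [hy, Function.update_self, hjk]
          · have hne : (j : ℕ) ≠ k := fun hc => h (Fin.ext hc)
            simp only [hy, Function.update_of_ne h]
            have : (j : ℕ) < k + 1 ↔ (j : ℕ) < k := by omega
            simp [this]
        have hstep : |F (y k) i - F (y (k + 1)) i| ≤ L i jk * |x jk - zstar jk| := by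
          rw [hupd]
          have := hlip (y k) (ymem k) i jk
          have hyk : y k jk = x jk := by simp [hy, hjk]
          rwa [hyk] at this
        have hfilter : Finset.univ.filter (fun j : Fin s => (j : ℕ) < k + 1)
            = insert jk (Finset.univ.filter (fun j : Fin s => (j : ℕ) < k)) := by
          ext j
          simp only [Finset.mem_filter, Finset.mem_univ, true_and, Finset.mem_insert]
          constructor
          · intro h
            rcases Nat.lt_succ_iff_lt_or_eq.mp h with h | h
            · exact Or.inr h
            · exact Or.inl (Fin.ext h)
          · rintro (rfl | h)
            · exact Nat.lt_succ_self k
            · omega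
        rw [hfilter, Finset.sum_insert (by simp [hjk])]
        calc |F x i - F (y (k + 1)) i|
            ≤ |F x i - F (y k) i| + |F (y k) i - F (y (k + 1)) i| := by
              have := abs_sub_le (F x i) (F (y k) i) (F (y (k + 1)) i); linarith
          _ ≤ L i jk * |x jk - zstar jk| +
              ∑ j ∈ Finset.univ.filter (fun j : Fin s => (j : ℕ) < k),
                L i j * |x j - zstar j| := by linarith
      · have heq : y (k + 1) = y k := by
          funext j
          have hj : (j : ℕ) < s := j.isLt
          have h1 : (j : ℕ) < k + 1 := by omega
          have h2 : (j : ℕ) < k := by omega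
          simp [hy, h1, h2]
        have hfe : (Finset.univ.filter (fun j : Fin s => (j : ℕ) < k + 1))
            = Finset.univ.filter (fun j : Fin s => (j : ℕ) < k) := by
          ext j
          have hj : (j : ℕ) < s := j.isLt
          simp only [Finset.mem_filter, Finset.mem_univ, true_and]
          omega
        rw [heq, hfe]; exact ih
  have hys : y s = zstar := by
    funext j; simp [hy, j.isLt]
  have := key s
  rw [hys, hfix] at this
  have hfull : (Finset.univ.filter (fun j : Fin s => (j : ℕ) < s)) = Finset.univ := by
    ext j; simp [j.isLt]
  rwa [hfull] at this

/-- if `I - L` is an M-matrix (weighted strict diagonal dominance)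
and `F` is componentwise Lipschitz with constants `L_{ij}` around its fixed
point `z_*` on an open box `D` containing `z_*`, then `z_*` is a strong
attractor of `F`: there are nested boxes
`I_n = ∏_i [x*_i − α^{n−1} c ξ_i, x*_i + α^{n−1} c ξ_i]` with `I_1 ⊆ D`,
`F(I_n) ⊆ I_{n+1}` for `n ≥ 1`, and `⋂_{n ≥ 1} I_n = {z_*}`. -/
theorem stmt4 {s : ℕ} (L : Matrix (Fin s) (Fin s) ℝ) (hL : ∀ i j, 0 ≤ L i j)
    (ξ : Fin s → ℝ) (hξ : ∀ i, 0 < ξ i)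
    (hdom : ∀ i, ∑ j ∈ Finset.univ.erase i, ξ j * L i j < ξ i * (1 - L i i))
    (F : (Fin s → ℝ) → (Fin s → ℝ)) (hF : Continuous F)
    (zstar : Fin s → ℝ)
    (aD bD : Fin s → ℝ) (D : Set (Fin s → ℝ))
    (hD : D = univ.pi fun i => Ioo (aD i) (bD i)) (hzD : zstar ∈ D)
    (hfix : F zstar = zstar)
    (hlip : ∀ x ∈ D, ∀ i j,
      |F x i - F (Function.update x j (zstar j)) i| ≤ L i j * |x j - zstar j|) :
    ∃ c : ℝ, 0 < c ∧ ∃ α : ℝ, α ∈ Ioo (0:ℝ) 1 ∧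
      ∀ I : ℕ → Set (Fin s → ℝ),
        (∀ n, I n = univ.pi fun i =>
          Icc (zstar i - α ^ (n - 1) * c * ξ i) (zstar i + α ^ (n - 1) * c * ξ i)) →
        I 1 ⊆ D ∧ (∀ n, 1 ≤ n → F '' I n ⊆ I (n + 1)) ∧
        ⋂ n ∈ {m : ℕ | 1 ≤ m}, I n = {zstar} := by
  rcases Nat.eq_zero_or_pos s with hs | hs
  · -- s = 0 : everything trivial
    subst hs
    refine ⟨1, one_pos, 1/2, ⟨by norm_num, by norm_num⟩, ?_⟩
    intro I hI
    have hIuniv : ∀ n, I n = univ := by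
      intro n; rw [hI n]; ext x; simp [Set.mem_pi]
    have hDu : D = univ := by
      rw [hD]; ext x; simp [Set.mem_pi]
    refine ⟨by rw [hIuniv, hDu], fun n _ => by rw [hIuniv (n+1)]; exact subset_univ _, ?_⟩
    have huniq : ∀ x : Fin 0 → ℝ, x = zstar := fun x => funext (fun j => j.elim0)
    ext x
    simp only [Set.mem_iInter, Set.mem_singleton_iff]
    constructor
    · intro _; exact huniq x
    · intro hx n hn; rw [hIuniv]; trivial
  · have hne : Nonempty (Fin s) := ⟨⟨0, hs⟩⟩
    have hxne : (Finset.univ : Finset (Fin s)).Nonempty := Finset.univ_nonempty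
    -- row sums bound
    have hrow : ∀ i, ∑ j, ξ j * L i j < ξ i := by
      intro i
      have := hdom i
      have hsplit : ∑ j, ξ j * L i j
          = ξ i * L i i + ∑ j ∈ Finset.univ.erase i, ξ j * L i j := by
        rw [← Finset.add_sum_erase _ _ (Finset.mem_univ i)]
      rw [hsplit]; nlinarith [this]
    -- α
    set A : Fin s → ℝ := fun i => (∑ j, ξ j * L i j) / ξ i with hA
    have hA1 : ∀ i, A i < 1 := fun i =>
      (div_lt_one (hξ i)).mpr (by simpa using hrow i)
    set α : ℝ := max (1/2) (Finset.univ.sup' hxne A) with hα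
    have hα0 : (0:ℝ) < α := lt_of_lt_of_le (by norm_num) (le_max_left _ _)
    have hα1 : α < 1 := by
      apply max_lt (by norm_num)
      exact (Finset.sup'_lt_iff hxne).mpr fun i _ => hA1 i
    have hαA : ∀ i, A i ≤ α :=
      fun i => le_trans (Finset.le_sup' A (Finset.mem_univ i)) (le_max_right _ _)
    have hαbound : ∀ i, ∑ j, ξ j * L i j ≤ α * ξ i := by
      intro i
      have := hαA i
      rw [hA] at this
      calc ∑ j, ξ j * L i j = A i * ξ i := by
            rw [hA]; rw [div_mul_cancel₀ _ (ne_of_gt (hξ i))]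
        _ ≤ α * ξ i := by nlinarith [hξ i]
    -- c
    set c : ℝ := (1/2) * Finset.univ.inf' hxne
        (fun i => min (zstar i - aD i) (bD i - zstar i) / ξ i) with hc
    have hzIoo : ∀ i, zstar i ∈ Ioo (aD i) (bD i) := by
      intro i; rw [hD] at hzD; exact hzD i (mem_univ i)
    have hc0 : 0 < c := by
      rw [hc]
      apply mul_pos (by norm_num)
      apply (Finset.lt_inf'_iff hxne).mpr
      intro i _
      exact div_pos (lt_min (by linarith [(hzIoo i).1]) (by linarith [(hzIoo i).2])) (hξ i)
    have hcb : ∀ i, c * ξ i < min (zstar i - aD i) (bD i - zstar i) := by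
      intro i
      have h1 : c ≤ (1/2) * (min (zstar i - aD i) (bD i - zstar i) / ξ i) := by
        rw [hc]
        have := Finset.inf'_le (fun i => min (zstar i - aD i) (bD i - zstar i) / ξ i)
          (Finset.mem_univ i)
        nlinarith
      have hm : 0 < min (zstar i - aD i) (bD i - zstar i) :=
        lt_min (by linarith [(hzIoo i).1]) (by linarith [(hzIoo i).2])
      have h2 : c * ξ i ≤ (1/2) * min (zstar i - aD i) (bD i - zstar i) := by
        have hξi := hξ i
        calc c * ξ i ≤ (1/2) * (min (zstar i - aD i) (bD i - zstar i) / ξ i) * ξ i := by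
              nlinarith
          _ = (1/2) * min (zstar i - aD i) (bD i - zstar i) := by
              field_simp
      linarith
    refine ⟨c, hc0, α, ⟨hα0, hα1⟩, ?_⟩
    intro I hI
    -- membership in I n implies in D
    have hID : ∀ n, I n ⊆ D := by
      intro n x hx
      rw [hI n] at hx
      rw [hD]
      intro i _
      have hxi := hx i (mem_univ i)
      simp only [mem_Icc] at hxi
      have hαpow : α ^ (n - 1) ≤ 1 :=
        pow_le_one₀ hα0.le hα1.le
      have hr : α ^ (n - 1) * c * ξ i ≤ c * ξ i := by
        have hp := mul_le_mul_of_nonneg_right hαpow (mul_pos hc0 (hξ i)).le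
        nlinarith [hp]
      have hb := hcb i
      constructor
      · have := min_le_left (zstar i - aD i) (bD i - zstar i); linarith [hxi.1]
      · have := min_le_right (zstar i - aD i) (bD i - zstar i); linarith [hxi.2]
    refine ⟨hID 1, ?_, ?_⟩
    · -- F maps I n into I (n+1)
      rintro n hn _ ⟨x, hx, rfl⟩
      have hxD : x ∈ D := hID n hx
      rw [hI n] at hx
      rw [hI (n + 1)]
      intro i _
      have hkey := tele_aux L F zstar aD bD D hD hzD hfix hlip x hxD i
      have hbd : ∀ j, |x j - zstar j| ≤ α ^ (n - 1) * c * ξ j := by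
        intro j
        have := hx j (mem_univ j)
        simp only [mem_Icc] at this
        rw [abs_sub_le_iff]; constructor <;> linarith [this.1, this.2]
      have hsum : ∑ j, L i j * |x j - zstar j| ≤ α ^ n * c * ξ i := by
        calc ∑ j, L i j * |x j - zstar j|
            ≤ ∑ j, L i j * (α ^ (n - 1) * c * ξ j) := by
              apply Finset.sum_le_sum
              intro j _
              exact mul_le_mul_of_nonneg_left (hbd j) (hL i j)
          _ = α ^ (n - 1) * c * ∑ j, ξ j * L i j := by
              rw [Finset.mul_sum]; congr 1; funext j; ring
          _ ≤ α ^ (n - 1) * c * (α * ξ i) := by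
              apply mul_le_mul_of_nonneg_left (hαbound i)
              positivity
          _ = α ^ (n - 1) * α * c * ξ i := by ring
          _ = α ^ n * c * ξ i := by
              congr 2
              rw [← pow_succ]
              congr 1
              omega
      have habs : |F x i - zstar i| ≤ α ^ n * c * ξ i := le_trans hkey hsum
      rw [abs_sub_le_iff] at habs
      simp only [mem_Icc, Nat.add_sub_cancel]
      constructor <;> linarith [habs.1, habs.2]
    · -- intersection is {zstar}
      ext x
      simp only [Set.mem_iInter, Set.mem_singleton_iff, Set.mem_setOf_eq]
      constructor
      · intro hx
        funext i
        have hb : ∀ n : ℕ, |x i - zstar i| ≤ α ^ n * (c * ξ i) := by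
          intro n
          have := hx (n + 1) (Nat.le_add_left 1 n)
          rw [hI (n + 1)] at this
          have hxi := this i (mem_univ i)
          simp only [mem_Icc, Nat.add_sub_cancel] at hxi
          rw [abs_sub_le_iff]
          constructor <;> [linarith [hxi.2]; linarith [hxi.1]]
        have htend : Filter.Tendsto (fun n : ℕ => α ^ n * (c * ξ i))
            Filter.atTop (nhds 0) := by
          have := tendsto_pow_atTop_nhds_zero_of_lt_one hα0.le hα1
          simpa using this.mul_const (c * ξ i)
        have : |x i - zstar i| ≤ 0 :=
          ge_of_tendsto htend (Filter.Eventually.of_forall hb)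
        have := abs_nonneg (x i - zstar i)
        have : x i - zstar i = 0 := by
          have := abs_eq_zero.mp (le_antisymm ‹|x i - zstar i| ≤ 0› (abs_nonneg _))
          exact this
        linarith [this]
      · rintro rfl n hn
        rw [hI n]
        intro i _
        have : 0 ≤ α ^ (n - 1) * c * ξ i :=
          mul_nonneg (mul_nonneg (pow_nonneg hα0.le _) hc0.le) (hξ i).le
        simp only [mem_Icc]
        constructor <;> linarith
end

section
/- Let f_1, f_2 : [0,∞) → [0,∞) be continuous, strictly increasing, f_1(0) = f_2(0) = 0, with f_2(x) > f_1^{-1}(x) on (0, x*) and f_2(x) < f_1^{-1}(x) on (x*, ∞), where y* = f_1(x*) = f_2(x*). Define sequences by a_{1,1} ∈ (0, x*) arbitrary, a_{2,n} = f_2(a_{1,n}), a_{1,n+1} = f_1(a_{2,n}). Then (a_{1,n}) is strictly increasing with a_{1,n} ∈ (0, x*), (a_{2,n}) is strictly increasing with a_{2,n} ∈ (0, y*), and a_{1,n} → x*, a_{2,n} → y* as n → ∞. -/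
open Set Filter

/-- the monotone iteration `a_{2,n} = f_2(a_{1,n})`,
`a_{1,n+1} = f_1(a_{2,n})`, started at `a_{1,1} ∈ (0, x*)`, is strictly
increasing, stays in `(0, x*) × (0, y*)`, and converges to `(x*, y*)`. -/
theorem stmt7 (f1 f2 g1 : ℝ → ℝ)
    (hc1 : ContinuousOn f1 (Ici 0)) (hc2 : ContinuousOn f2 (Ici 0))
    (hm1 : StrictMonoOn f1 (Ici 0)) (hm2 : StrictMonoOn f2 (Ici 0))
    (h10 : f1 0 = 0) (h20 : f2 0 = 0)
    (hmap1 : MapsTo f1 (Ici 0) (Ici 0)) (hmap2 : MapsTo f2 (Ici 0) (Ici 0))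
    (hg1 : ∀ x ∈ Ici (0:ℝ), g1 (f1 x) = x ∧ 0 ≤ g1 x ∧ f1 (g1 x) = x)
    (xstar ystar : ℝ) (hx : 0 < xstar)
    (hy : ystar = f2 xstar) (hfp : f1 ystar = xstar)
    (hlt : ∀ x ∈ Ioo 0 xstar, f2 x > g1 x)
    (hgt : ∀ x ∈ Ioi xstar, f2 x < g1 x)
    (a1 a2 : ℕ → ℝ) (ha11 : a1 1 ∈ Ioo 0 xstar)
    (ha2 : ∀ n, 1 ≤ n → a2 n = f2 (a1 n))
    (ha1 : ∀ n, 1 ≤ n → a1 (n + 1) = f1 (a2 n)) :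
    (∀ n, 1 ≤ n → a1 n < a1 (n + 1)) ∧ (∀ n, 1 ≤ n → a1 n ∈ Ioo 0 xstar) ∧
    (∀ n, 1 ≤ n → a2 n < a2 (n + 1)) ∧ (∀ n, 1 ≤ n → a2 n ∈ Ioo 0 ystar) ∧
    Tendsto a1 atTop (nhds xstar) ∧ Tendsto a2 atTop (nhds ystar) := by
  have h0x : (0:ℝ) ≤ xstar := hx.le
  have hyst : 0 < ystar := by
    rw [hy, ← h20]; exact hm2 (mem_Ici.mpr le_rfl) h0x hx
  -- key property of F = f1 ∘ f2
  have hFmem : ∀ x ∈ Ioo 0 xstar, f1 (f2 x) ∈ Ioo x xstar := by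
    intro x hx'
    obtain ⟨hx0, hxs⟩ := hx'
    have hx0' : (0:ℝ) ≤ x := hx0.le
    have hf2x : (0:ℝ) ≤ f2 x := hmap2 hx0'
    obtain ⟨_, hg0, hgf⟩ := hg1 x hx0'
    refine ⟨?_, ?_⟩
    · calc x = f1 (g1 x) := hgf.symm
        _ < f1 (f2 x) := hm1 hg0 hf2x (hlt x ⟨hx0, hxs⟩)
    · have h2 : f2 x < f2 xstar := hm2 hx0' h0x hxs
      calc f1 (f2 x) < f1 (f2 xstar) := hm1 hf2x (hmap2 h0x) h2
        _ = xstar := by rw [← hy, hfp]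
  -- invariant
  have hinv : ∀ n, 1 ≤ n → a1 n ∈ Ioo 0 xstar := by
    intro n
    induction n with
    | zero => omega
    | succ m ih =>
      intro hn
      rcases Nat.lt_or_ge 0 m with h | h
      · have hm' : 1 ≤ m := h
        have hmem := ih hm'
        have hstep : a1 (m + 1) = f1 (f2 (a1 m)) := by
          rw [ha1 m hm', ha2 m hm']
        rw [hstep]
        have := hFmem _ hmem
        exact ⟨lt_trans hmem.1 this.1, this.2⟩
      · have : m = 0 := by omega
        subst this; exact ha11
  have hstep : ∀ n, 1 ≤ n → a1 (n + 1) = f1 (f2 (a1 n)) := by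
    intro n hn; rw [ha1 n hn, ha2 n hn]
  have hmono : ∀ n, 1 ≤ n → a1 n < a1 (n + 1) := by
    intro n hn
    rw [hstep n hn]
    exact (hFmem _ (hinv n hn)).1
  -- convergence of a1
  set b : ℕ → ℝ := fun n => a1 (n + 1) with hb
  have hbmono : Monotone b := by
    apply monotone_nat_of_le_succ
    intro n
    exact (hmono (n + 1) (by omega)).le
  have hbdd : BddAbove (Set.range b) := by
    refine ⟨xstar, ?_⟩
    rintro y ⟨n, rfl⟩
    exact (hinv (n + 1) (by omega)).2.le
  have hbtend : Tendsto b atTop (nhds (⨆ n, b n)) := tendsto_atTop_ciSup hbmono hbdd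
  set L : ℝ := ⨆ n, b n with hL
  have hLle : L ≤ xstar := ciSup_le fun n => (hinv (n + 1) (by omega)).2.le
  have hL0 : 0 < L := lt_of_lt_of_le (hinv 1 le_rfl).1 (le_ciSup hbdd 0)
  have hbpos : ∀ n, b n ∈ Ici (0:ℝ) := fun n => (hinv (n + 1) (by omega)).1.le
  -- F L = L
  have hcF : ContinuousOn (fun x => f1 (f2 x)) (Ici 0) := hc1.comp hc2 hmap2
  have htendw : Tendsto b atTop (nhdsWithin L (Ici 0)) :=
    tendsto_nhdsWithin_of_tendsto_nhds_of_eventually_within b hbtend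
      (Eventually.of_forall hbpos)
  have htendF : Tendsto (fun n => f1 (f2 (b n))) atTop (nhds (f1 (f2 L))) :=
    ((hcF L hL0.le).tendsto).comp htendw
  have htendF' : Tendsto (fun n => b (n + 1)) atTop (nhds L) :=
    (tendsto_add_atTop_iff_nat 1).mpr hbtend
  have hFL : f1 (f2 L) = L := by
    have heq : (fun n => f1 (f2 (b n))) = fun n => b (n + 1) := by
      funext n
      exact (hstep (n + 1) (by omega)).symm
    rw [heq] at htendF
    exact tendsto_nhds_unique htendF htendF'
  have hLx : L = xstar := by
    by_contra h
    have : L < xstar := lt_of_le_of_ne hLle h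
    have := (hFmem L ⟨hL0, this⟩).1
    rw [hFL] at this
    exact lt_irrefl _ this
  rw [hLx] at hbtend
  have hta1 : Tendsto a1 atTop (nhds xstar) := (tendsto_add_atTop_iff_nat 1).mp hbtend
  -- a2 facts
  have hinv2 : ∀ n, 1 ≤ n → a2 n ∈ Ioo 0 ystar := by
    intro n hn
    obtain ⟨h1, h2⟩ := hinv n hn
    rw [ha2 n hn]
    constructor
    · rw [← h20]; exact hm2 (mem_Ici.mpr le_rfl) h1.le h1
    · rw [hy]; exact hm2 h1.le h0x h2
  have hmono2 : ∀ n, 1 ≤ n → a2 n < a2 (n + 1) := by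
    intro n hn
    rw [ha2 n hn, ha2 (n + 1) (by omega)]
    exact hm2 (hinv n hn).1.le (hinv (n + 1) (by omega)).1.le (hmono n hn)
  have hta1w : Tendsto a1 atTop (nhdsWithin xstar (Ici 0)) :=
    tendsto_nhdsWithin_of_tendsto_nhds_of_eventually_within a1 hta1
      (eventually_atTop.2 ⟨1, fun n hn => (hinv n hn).1.le⟩)
  have hta2 : Tendsto a2 atTop (nhds ystar) := by
    have h1 : Tendsto (fun n => f2 (a1 n)) atTop (nhds (f2 xstar)) :=
      ((hc2 xstar h0x).tendsto).comp hta1w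
    rw [← hy] at h1
    exact h1.congr' (eventually_atTop.2 ⟨1, fun n hn => (ha2 n hn).symm⟩)
  exact ⟨hmono, hinv, hmono2, hinv2, hta1, hta2⟩
end

section
/- Let f_1, f_2 : [0,∞) → [0,∞) be continuous, strictly increasing, f_1(0) = f_2(0) = 0, with f_2(x) > f_1^{-1}(x) on (0, x*) and f_2(x) < f_1^{-1}(x) on (x*, ∞), y* = f_1(x*). Define b_{1,1} ∈ (x*, ∞) arbitrary, b_{2,n} = f_2(b_{1,n}), b_{1,n+1} = f_1(b_{2,n}). Then (b_{1,n}) is strictly decreasing with b_{1,n} ∈ (x*, ∞), (b_{2,n}) is strictly decreasing with b_{2,n} ∈ (y*, ∞), and b_{1,n} → x*, b_{2,n} → y*. -/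
open Set Filter

/-- the monotone iteration `b_{2,n} = f_2(b_{1,n})`,
`b_{1,n+1} = f_1(b_{2,n})`, started at `b_{1,1} ∈ (x*, ∞)`, is strictly
decreasing, stays in `(x*, ∞) × (y*, ∞)`, and converges to `(x*, y*)`. -/
theorem stmt8 (f1 f2 g1 : ℝ → ℝ)
    (hc1 : ContinuousOn f1 (Ici 0)) (hc2 : ContinuousOn f2 (Ici 0))
    (hm1 : StrictMonoOn f1 (Ici 0)) (hm2 : StrictMonoOn f2 (Ici 0))
    (h10 : f1 0 = 0) (h20 : f2 0 = 0)
    (hmap1 : MapsTo f1 (Ici 0) (Ici 0)) (hmap2 : MapsTo f2 (Ici 0) (Ici 0))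
    (hg1 : ∀ x ∈ Ici (0:ℝ), g1 (f1 x) = x ∧ 0 ≤ g1 x ∧ f1 (g1 x) = x)
    (xstar ystar : ℝ) (hx : 0 < xstar)
    (hy : ystar = f2 xstar) (hfp : f1 ystar = xstar)
    (hlt : ∀ x ∈ Ioo 0 xstar, f2 x > g1 x)
    (hgt : ∀ x ∈ Ioi xstar, f2 x < g1 x)
    (b1 b2 : ℕ → ℝ) (hb11 : b1 1 ∈ Ioi xstar)
    (hb2 : ∀ n, 1 ≤ n → b2 n = f2 (b1 n))
    (hb1 : ∀ n, 1 ≤ n → b1 (n + 1) = f1 (b2 n)) :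
    (∀ n, 1 ≤ n → b1 (n + 1) < b1 n) ∧ (∀ n, 1 ≤ n → b1 n ∈ Ioi xstar) ∧
    (∀ n, 1 ≤ n → b2 (n + 1) < b2 n) ∧ (∀ n, 1 ≤ n → b2 n ∈ Ioi ystar) ∧
    Tendsto b1 atTop (nhds xstar) ∧ Tendsto b2 atTop (nhds ystar) := by
  have hx0 : (0:ℝ) ∈ Ici (0:ℝ) := self_mem_Ici
  have hxs : xstar ∈ Ici (0:ℝ) := mem_Ici.mpr (le_of_lt hx)
  have hy0 : 0 < ystar := by
    rw [hy, ← h20]; exact hm2 hx0 hxs hx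
  have hys : ystar ∈ Ici (0:ℝ) := mem_Ici.mpr (le_of_lt hy0)
  have key : ∀ x, xstar < x → ystar < f2 x ∧ xstar < f1 (f2 x) ∧ f1 (f2 x) < x := by
    intro x hxx
    have hxI : x ∈ Ici (0:ℝ) := mem_Ici.mpr (le_of_lt (lt_trans hx hxx))
    have h1 : ystar < f2 x := by rw [hy]; exact hm2 hxs hxI hxx
    have hf2x : f2 x ∈ Ici (0:ℝ) := hmap2 hxI
    obtain ⟨hg1f, hg1pos, hfg1⟩ := hg1 x hxI
    have h2 : f2 x < g1 x := hgt x hxx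
    have h3 : f1 (f2 x) < x := by
      have := hm1 hf2x hg1pos h2
      rwa [hfg1] at this
    have h4 : xstar < f1 (f2 x) := by
      rw [← hfp]; exact hm1 hys hf2x h1
    exact ⟨h1, h4, h3⟩
  have hB1 : ∀ n, 1 ≤ n → xstar < b1 n := by
    intro n hn
    induction n, hn using Nat.le_induction with
    | base => exact hb11
    | succ m hm ih =>
      rw [hb1 m hm, hb2 m hm]
      exact (key _ ih).2.1
  have hdec1 : ∀ n, 1 ≤ n → b1 (n + 1) < b1 n := by
    intro n hn
    rw [hb1 n hn, hb2 n hn]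
    exact (key _ (hB1 n hn)).2.2
  have hB2 : ∀ n, 1 ≤ n → ystar < b2 n := by
    intro n hn
    rw [hb2 n hn]
    exact (key _ (hB1 n hn)).1
  have hdec2 : ∀ n, 1 ≤ n → b2 (n + 1) < b2 n := by
    intro n hn
    rw [hb2 n hn, hb2 (n + 1) (by omega)]
    exact hm2 (mem_Ici.mpr (le_of_lt (lt_trans hx (hB1 (n + 1) (by omega)))))
      (mem_Ici.mpr (le_of_lt (lt_trans hx (hB1 n hn)))) (hdec1 n hn)
  -- convergence
  set c : ℕ → ℝ := fun n => b1 (n + 1) with hc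
  have hcanti : Antitone c :=
    antitone_nat_of_succ_le fun n => le_of_lt (hdec1 (n + 1) (by omega))
  have hbdd : BddBelow (range c) := by
    refine ⟨xstar, ?_⟩
    rintro y ⟨n, rfl⟩
    exact le_of_lt (hB1 (n + 1) (by omega))
  set L : ℝ := ⨅ n, c n with hLdef
  have hcL : Tendsto c atTop (nhds L) := tendsto_atTop_ciInf hcanti hbdd
  have hLx : xstar ≤ L := le_ciInf fun n => le_of_lt (hB1 (n + 1) (by omega))
  have hL0 : 0 < L := lt_of_lt_of_le hx hLx
  have hf2L : ystar ≤ f2 L := by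
    rw [hy]
    exact hm2.monotoneOn hxs (mem_Ici.mpr (le_of_lt hL0)) hLx
  have hf2Lpos : 0 < f2 L := lt_of_lt_of_le hy0 hf2L
  have cont2 : ContinuousAt f2 L := hc2.continuousAt (Ici_mem_nhds hL0)
  have cont1 : ContinuousAt f1 (f2 L) := hc1.continuousAt (Ici_mem_nhds hf2Lpos)
  have heq : ∀ n, c (n + 1) = f1 (f2 (c n)) := by
    intro n
    simp only [hc]
    rw [hb1 (n + 1) (by omega), hb2 (n + 1) (by omega)]
  have htend1 : Tendsto (fun n => f1 (f2 (c n))) atTop (nhds (f1 (f2 L))) :=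
    (cont1.comp cont2).tendsto.comp hcL
  have htend2 : Tendsto (fun n => c (n + 1)) atTop (nhds L) :=
    hcL.comp (tendsto_add_atTop_nat 1)
  have hLfix : f1 (f2 L) = L := by
    refine tendsto_nhds_unique ?_ htend2
    exact htend1.congr fun n => (heq n).symm
  have hLeq : L = xstar := by
    by_contra h
    have hLgt : xstar < L := lt_of_le_of_ne hLx (Ne.symm h)
    have := (key L hLgt).2.2
    rw [hLfix] at this
    exact lt_irrefl _ this
  have hb1tend : Tendsto b1 atTop (nhds xstar) := by
    rw [← hLeq]
    exact (tendsto_add_atTop_iff_nat 1).mp hcL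
  have hb2tend : Tendsto b2 atTop (nhds ystar) := by
    have cont2x : ContinuousAt f2 xstar := hc2.continuousAt (Ici_mem_nhds hx)
    have : Tendsto (fun n => f2 (b1 n)) atTop (nhds ystar) := by
      rw [hy]
      exact cont2x.tendsto.comp hb1tend
    refine this.congr' ?_
    filter_upwards [eventually_ge_atTop 1] with n hn
    exact (hb2 n hn).symm
  exact ⟨hdec1, fun n hn => hB1 n hn, hdec2, fun n hn => hB2 n hn, hb1tend, hb2tend⟩
end

section
/- Let β ∈ (1, e²) and define α(β) = max{1 − ln β, β e^{-2}} if β ≤ e, and α(β) = β e^{-2} if β > e. Then for all x ≥ x⁰, where x⁰ = ln β if β < e and x⁰ = (β²/e)e^{-β/e} if β ≥ e, one has β|1 − x|e^{-x} ≤ α(β), and moreover α(β) < 1. -/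
lemma L1 (x : ℝ) : (x - 1) * Real.exp (-x) ≤ Real.exp (-2) := by
  have h : x - 1 ≤ Real.exp (x - 2) := by
    have := Real.add_one_le_exp (x - 2); linarith
  have hp : (0:ℝ) < Real.exp (-x) := Real.exp_pos _
  calc (x - 1) * Real.exp (-x) ≤ Real.exp (x - 2) * Real.exp (-x) :=
        mul_le_mul_of_nonneg_right h hp.le
    _ = Real.exp (-2) := by rw [← Real.exp_add]; ring_nf

lemma exp_quad {t : ℝ} (h0 : 0 ≤ t) (h1 : t ≤ 1) : Real.exp t ≤ 1 + t + t ^ 2 := by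
  have h := Real.exp_bound' h0 h1 (n := 3) (by norm_num)
  have hs : (∑ m ∈ Finset.range 3, t ^ m / m.factorial) = 1 + t + t ^ 2 / 2 := by
    simp [Finset.sum_range_succ, Nat.factorial]
  rw [hs] at h
  have h2 : t ^ 3 ≤ t ^ 2 := pow_le_pow_of_le_one h0 h1 (by norm_num)
  have h3 : ((Nat.factorial 3 : ℝ)) = 6 := by norm_num [Nat.factorial]
  rw [h3] at h
  push_cast at h
  nlinarith [sq_nonneg t]

lemma L2 {β x : ℝ} (hb : 1 ≤ β) (hx1 : x ≤ 1) (hx : Real.log β ≤ x) :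
    β * (1 - x) * Real.exp (-x) ≤ 1 - Real.log β := by
  have hbpos : (0:ℝ) < β := by linarith
  set t := Real.log β - x with ht
  have htle : t ≤ 0 := by simp [ht]; linarith
  have he : Real.exp t ≤ 1 := Real.exp_le_one_iff.mpr htle
  have hbe : β * Real.exp (-x) = Real.exp t := by
    rw [ht, Real.exp_sub, Real.exp_log hbpos, Real.exp_neg, div_eq_mul_inv]
  have key : (1 - x) * Real.exp t ≤ (1 - x) - t := by
    nlinarith [mul_nonneg (by linarith : (0:ℝ) ≤ 1 - x) (by linarith : 0 ≤ 1 - Real.exp t)]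
  calc β * (1 - x) * Real.exp (-x) = (1 - x) * (β * Real.exp (-x)) := by ring
    _ = (1 - x) * Real.exp t := by rw [hbe]
    _ ≤ (1 - x) - t := key
    _ = 1 - Real.log β := by rw [ht]; ring

lemma expsq {u : ℝ} (h1 : 1 ≤ u) (h2 : u ≤ 3) : Real.exp (u - 1) ≤ u ^ 2 := by
  set t := (u - 1) / 2 with htdef
  have h0 : 0 ≤ t := by simp [htdef]; linarith
  have ht1 : t ≤ 1 := by simp [htdef]; linarith
  have hq : Real.exp t ≤ 1 + 2 * t := by
    have := exp_quad h0 ht1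
    nlinarith [sq_nonneg t]
  have hu : 1 + 2 * t = u := by rw [htdef]; ring
  have hpos : 0 ≤ Real.exp t := (Real.exp_pos t).le
  have : Real.exp (u - 1) = Real.exp t * Real.exp t := by
    rw [← Real.exp_add, htdef]; ring_nf
  rw [this]
  calc Real.exp t * Real.exp t ≤ (1 + 2*t) * (1 + 2*t) :=
        mul_le_mul hq hq hpos (by linarith)
    _ = u ^ 2 := by rw [hu]; ring

/-- for `β ∈ (1, e²)`, with
`α(β) = max{1 − ln β, β e^{−2}}` if `β ≤ e` and `α(β) = β e^{−2}` otherwise,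
and `x⁰ = ln β` if `β < e`, `x⁰ = (β²/e)e^{−β/e}` if `β ≥ e`, one has
`β|1 − x|e^{−x} ≤ α(β)` for all `x ≥ x⁰`, and `α(β) < 1`. -/
theorem stmt15 (β : ℝ) (hβ : 1 < β ∧ β < Real.exp 1 ^ 2)
    (α x0 : ℝ)
    (hα : α = if β ≤ Real.exp 1 then
        max (1 - Real.log β) (β * Real.exp (-2)) else β * Real.exp (-2))
    (hx0 : x0 = if β < Real.exp 1 then Real.log β
        else (β ^ 2 / Real.exp 1) * Real.exp (-(β / Real.exp 1))) :
    (∀ x : ℝ, x0 ≤ x → β * |1 - x| * Real.exp (-x) ≤ α) ∧ α < 1 := by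
  obtain ⟨hb1, hb2⟩ := hβ
  have hbpos : (0:ℝ) < β := by linarith
  have hexp2 : Real.exp 1 ^ 2 * Real.exp (-2) = 1 := by
    rw [sq, ← Real.exp_add, ← Real.exp_add]
    norm_num
  have hbe2 : β * Real.exp (-2) < 1 := by
    have := mul_lt_mul_of_pos_right hb2 (Real.exp_pos (-2))
    linarith
  have hα1 : α < 1 := by
    rw [hα]; split_ifs with h
    · exact max_lt (by have := Real.log_pos hb1; linarith) hbe2
    · exact hbe2
  have hαge : β * Real.exp (-2) ≤ α := by
    rw [hα]; split_ifs with h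
    · exact le_max_right _ _
    · exact le_refl _
  refine ⟨fun x hx => ?_, hα1⟩
  have hge1 : ∀ y : ℝ, 1 ≤ y → β * |1 - y| * Real.exp (-y) ≤ α := by
    intro y hy
    rw [abs_of_nonpos (by linarith)]
    have h := mul_le_mul_of_nonneg_left (L1 y) hbpos.le
    calc β * -(1 - y) * Real.exp (-y) = β * ((y - 1) * Real.exp (-y)) := by ring
      _ ≤ β * Real.exp (-2) := h
      _ ≤ α := hαge
  by_cases hce : β < Real.exp 1
  · rw [if_pos hce] at hx0
    have hαgeL : 1 - Real.log β ≤ α := by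
      rw [hα, if_pos hce.le]; exact le_max_left _ _
    rcases le_total x 1 with hx1 | hx1
    · rw [abs_of_nonneg (by linarith)]
      exact (L2 hb1.le hx1 (hx0 ▸ hx)).trans hαgeL
    · exact hge1 x hx1
  · push_neg at hce
    rw [if_neg (not_lt.mpr hce)] at hx0
    have hepos : (0:ℝ) < Real.exp 1 := Real.exp_pos 1
    have he3 : Real.exp 1 ≤ 3 := by
      have := Real.exp_one_lt_d9; linarith
    have hu1 : 1 ≤ β / Real.exp 1 := (one_le_div hepos).mpr hce
    have hue : β / Real.exp 1 ≤ 3 := by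
      rw [div_le_iff₀ hepos]
      nlinarith
    have hq := expsq hu1 hue
    have hx01 : 1 ≤ x0 := by
      have hrw : x0 = Real.exp 1 * ((β / Real.exp 1) ^ 2 * Real.exp (-(β / Real.exp 1))) := by
        have hh : Real.exp 1 * (β / Real.exp 1) ^ 2 = β ^ 2 / Real.exp 1 := by
          field_simp
        rw [hx0, ← mul_assoc, hh]
      have hE : 0 < Real.exp (-(β / Real.exp 1)) := Real.exp_pos _
      have step : Real.exp (β / Real.exp 1 - 1) * Real.exp (-(β / Real.exp 1))
          ≤ (β / Real.exp 1) ^ 2 * Real.exp (-(β / Real.exp 1)) :=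
        mul_le_mul_of_nonneg_right hq hE.le
      have heq : Real.exp (β / Real.exp 1 - 1) * Real.exp (-(β / Real.exp 1))
          = Real.exp (-1) := by rw [← Real.exp_add]; ring_nf
      have h1 : Real.exp 1 * Real.exp (-1) = 1 := by
        rw [← Real.exp_add]; norm_num
      rw [hrw]
      calc (1:ℝ) = Real.exp 1 * Real.exp (-1) := h1.symm
        _ = Real.exp 1 * (Real.exp (β / Real.exp 1 - 1) * Real.exp (-(β / Real.exp 1))) := by
            rw [heq]
        _ ≤ Real.exp 1 * ((β / Real.exp 1) ^ 2 * Real.exp (-(β / Real.exp 1))) :=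
            mul_le_mul_of_nonneg_left step hepos.le
    exact hge1 x (by linarith)
end
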